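/- Let τ ∈ iℝ_{>0}, so 0 < q = exp(2πiτ) < 1, and let λ ∈ ℝ. Define the operators (X⁺_λ f)(z) = q^{z}·( q^{−1/2−iλ}f(z−1) − q^{1/2+iλ}f(z+1) )/(q^{−1}−q), (X⁻_λ f)(z) = q^{−z}·( q^{−1/2−iλ}f(z+1) − q^{1/2+iλ}f(z−1) )/(q^{−1}−q), and the pairing ⟨f,g⟩ = ∫_0^1 f(y/τ)·conj(g(y/τ)) dy. Suppose f, g : ℂ → ℂ are τ^{-1}-periodic and analytic on the strip {z ∈ ℂ : |Re(z)| ≤ 1}. Then ⟨X⁺_λ f, g⟩ = −⟨f, X⁻_λ g⟩, ⟨X⁻_λ f, g⟩ = −⟨f, X⁺_λ g⟩, and ⟨f(·+1), g⟩ = ⟨f, g(·+1)⟩ as well as ⟨f(·−1), g⟩ = ⟨f, g(·−1)⟩. -/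

import Mathlib

noncomputable section

open Complex MeasureTheory

/-- `q^u = exp(2πiτu)`. -/
def qpow (τ u : ℂ) : ℂ := Complex.exp (2 * (Real.pi : ℂ) * Complex.I * τ * u)

/-- The principal series action of the generator `X⁺`:
`(X⁺_λ f)(z) = q^z·(q^{−1/2−iλ}f(z−1) − q^{1/2+iλ}f(z+1))/(q^{−1}−q)`. -/
def Xplus (τ lam : ℂ) (f : ℂ → ℂ) (z : ℂ) : ℂ :=
  qpow τ z * (qpow τ (-(1 / 2) - Complex.I * lam) * f (z - 1) -
      qpow τ (1 / 2 + Complex.I * lam) * f (z + 1)) / (qpow τ (-1) - qpow τ 1)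

/-- The principal series action of the generator `X⁻`:
`(X⁻_λ f)(z) = q^{−z}·(q^{−1/2−iλ}f(z+1) − q^{1/2+iλ}f(z−1))/(q^{−1}−q)`. -/
def Xminus (τ lam : ℂ) (f : ℂ → ℂ) (z : ℂ) : ℂ :=
  qpow τ (-z) * (qpow τ (-(1 / 2) - Complex.I * lam) * f (z + 1) -
      qpow τ (1 / 2 + Complex.I * lam) * f (z - 1)) / (qpow τ (-1) - qpow τ 1)

/-- The pairing `⟨f,g⟩ = ∫_0^1 f(y/τ)·conj(g(y/τ)) dy`. -/
def pairSU (τ : ℂ) (f g : ℂ → ℂ) : ℂ :=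
  ∫ y in (0 : ℝ)..1, f ((y : ℂ) / τ) * (starRingEnd ℂ) (g ((y : ℂ) / τ))

namespace PSUaux

lemma qpow_add (τ u v : ℂ) : qpow τ (u + v) = qpow τ u * qpow τ v := by
  simp [qpow, mul_add, Complex.exp_add]

lemma qpow_inv (τ : ℂ) (hτ : τ ≠ 0) : qpow τ τ⁻¹ = 1 := by
  have : 2 * (Real.pi : ℂ) * Complex.I * τ * τ⁻¹ = 2 * Real.pi * Complex.I := by
    field_simp
  rw [qpow, this, Complex.exp_two_pi_mul_I]

lemma qpow_diff (τ : ℂ) : Differentiable ℂ (qpow τ) := by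
  unfold qpow; fun_prop

lemma qpow_cont (τ : ℂ) : Continuous (qpow τ) := (qpow_diff τ).continuous

lemma conj_qpow (t : ℝ) (τ : ℂ) (hτ : τ = Complex.I * t) (u : ℂ) :
    (starRingEnd ℂ) (qpow τ u) = qpow τ ((starRingEnd ℂ) u) := by
  rw [qpow, qpow, ← Complex.exp_conj]
  congr 1
  subst hτ
  simp only [map_mul, map_ofNat, Complex.conj_ofReal, Complex.conj_I]
  ring

lemma hasDerivAt_conj_conj {g : ℂ → ℂ} {d z : ℂ}
    (h : HasDerivAt g d ((starRingEnd ℂ) z)) :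
    HasDerivAt (fun w => (starRingEnd ℂ) (g ((starRingEnd ℂ) w))) ((starRingEnd ℂ) d) z := by
  rw [hasDerivAt_iff_isLittleO] at h ⊢
  have hc : Filter.Tendsto (starRingEnd ℂ) (nhds z) (nhds ((starRingEnd ℂ) z)) :=
    (Complex.continuous_conj.tendsto z)
  have h2 := h.comp_tendsto hc
  rw [Asymptotics.isLittleO_iff] at h2 ⊢
  intro ε hε
  filter_upwards [h2 hε] with w hw
  have e1 : (starRingEnd ℂ) (g ((starRingEnd ℂ) w)) - (starRingEnd ℂ) (g ((starRingEnd ℂ) z)) -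
      (w - z) • (starRingEnd ℂ) d =
      (starRingEnd ℂ) (g ((starRingEnd ℂ) w) - g ((starRingEnd ℂ) z) -
        ((starRingEnd ℂ) w - (starRingEnd ℂ) z) • d) := by
    simp only [smul_eq_mul, map_sub, map_mul, Complex.conj_conj]
  rw [e1, RCLike.norm_conj]
  calc ‖g ((starRingEnd ℂ) w) - g ((starRingEnd ℂ) z) -
        ((starRingEnd ℂ) w - (starRingEnd ℂ) z) • d‖
      ≤ ε * ‖(starRingEnd ℂ) w - (starRingEnd ℂ) z‖ := hw
    _ = ε * ‖w - z‖ := by rw [← map_sub, RCLike.norm_conj]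

lemma shift_lemma (t : ℝ) (ht : 0 < t) (τ : ℂ) (hτ : τ = Complex.I * t)
    (H : ℂ → ℂ) (x₀ : ℝ)
    (per : ∀ z : ℂ, H (z + τ⁻¹) = H z)
    (hd : ∀ z : ℂ, z.re ∈ Set.uIcc x₀ (x₀ + 1) → DifferentiableAt ℂ H z) :
    ∫ y in (0:ℝ)..1, H ((y:ℂ)/τ + x₀) = ∫ y in (0:ℝ)..1, H ((y:ℂ)/τ + (x₀ + 1)) := by
  have ht0 : (t:ℂ) ≠ 0 := Complex.ofReal_ne_zero.mpr ht.ne'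
  have hτ0 : τ ≠ 0 := by rw [hτ]; exact mul_ne_zero Complex.I_ne_zero ht0
  have hinv : τ⁻¹ = ((-(1/t) : ℝ) : ℂ) * Complex.I := by
    rw [hτ]; push_cast
    rw [mul_inv, Complex.inv_I]
    field_simp
  have hzre : ((x₀:ℝ) : ℂ).re = x₀ := by simp
  have hzim : ((x₀:ℝ) : ℂ).im = 0 := by simp
  have hwre : (((x₀ : ℝ) : ℂ) + 1 + ((-(1/t) : ℝ) : ℂ) * Complex.I).re = x₀ + 1 := by simp
  have hwim : (((x₀ : ℝ) : ℂ) + 1 + ((-(1/t) : ℝ) : ℂ) * Complex.I).im = -(1/t) := by simp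
  have key := Complex.integral_boundary_rect_eq_zero_of_differentiableOn H ((x₀:ℝ) : ℂ)
      (((x₀ : ℝ) : ℂ) + 1 + ((-(1/t) : ℝ) : ℂ) * Complex.I) ?hd
  case hd =>
    intro u hu
    rw [Complex.mem_reProdIm] at hu
    refine (hd u ?_).differentiableWithinAt
    rw [hzre, hwre] at hu
    exact hu.1
  rw [hzre, hzim, hwre, hwim] at key
  have hper : ∀ x : ℝ, H ((x : ℂ) + ((-(1/t):ℝ) : ℂ) * Complex.I) = H x := by
    intro x
    rw [← hinv, per]
  have e1 : (∫ x : ℝ in x₀..(x₀+1), H ((x:ℂ) + ((0:ℝ):ℂ) * Complex.I)) =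
      ∫ x : ℝ in x₀..(x₀+1), H ((x:ℂ) + ((-(1/t):ℝ):ℂ) * Complex.I) := by
    refine intervalIntegral.integral_congr fun x _ => ?_
    rw [hper]; norm_num
  rw [← e1] at key
  simp only [smul_eq_mul] at key
  have key2 : (∫ y : ℝ in (0:ℝ)..(-(1/t)), H (((x₀+1 : ℝ):ℂ) + (y:ℂ) * Complex.I)) =
      ∫ y : ℝ in (0:ℝ)..(-(1/t)), H (((x₀:ℝ):ℂ) + (y:ℂ) * Complex.I) := by
    have h0 : Complex.I * (∫ y : ℝ in (0:ℝ)..(-(1/t)), H ((↑(x₀+1) : ℂ) + (y:ℂ) * Complex.I)) =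
        Complex.I * ∫ y : ℝ in (0:ℝ)..(-(1/t)), H ((↑x₀ : ℂ) + (y:ℂ) * Complex.I) := by
      push_cast at key ⊢
      linear_combination key
    exact mul_left_cancel₀ Complex.I_ne_zero h0
  have hc : ∀ y : ℝ, (y:ℂ)/τ = ((-(1/t) * y : ℝ) : ℂ) * Complex.I := by
    intro y
    rw [hτ]; push_cast
    field_simp
    ring_nf
    rw [Complex.I_sq]
    ring
  have hne : (-(1/t) : ℝ) ≠ 0 := by
    have : (0:ℝ) < 1/t := by positivity
    simpa using this.ne'
  have cov : ∀ x' : ℝ, (∫ y in (0:ℝ)..1, H ((y:ℂ)/τ + x')) =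
      (-(1/t))⁻¹ • ∫ s in (0:ℝ)..(-(1/t)), H ((x' : ℂ) + (s:ℂ) * Complex.I) := by
    intro x'
    calc (∫ y in (0:ℝ)..1, H ((y:ℂ)/τ + x'))
        = ∫ y in (0:ℝ)..1, (fun s : ℝ => H ((x' : ℂ) + (s:ℂ) * Complex.I)) (-(1/t) * y) := by
          refine intervalIntegral.integral_congr fun y _ => ?_
          simp only
          rw [hc y]; ring_nf
      _ = (-(1/t))⁻¹ • ∫ s in (-(1/t) * 0)..(-(1/t) * 1),
            (fun s : ℝ => H ((x' : ℂ) + (s:ℂ) * Complex.I)) s :=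
          intervalIntegral.integral_comp_mul_left
            (fun s : ℝ => H ((x' : ℂ) + (s:ℂ) * Complex.I)) hne
      _ = (-(1/t))⁻¹ • ∫ s in (0:ℝ)..(-(1/t)), H ((x' : ℂ) + (s:ℂ) * Complex.I) := by
          norm_num
  have c1 := cov x₀
  have c2 := cov (x₀ + 1)
  push_cast at c1 c2 key2 ⊢
  rw [c1, c2, key2]

lemma intervalIntegral_conj (F : ℝ → ℂ) (a b : ℝ) :
    (∫ y in a..b, (starRingEnd ℂ) (F y)) = (starRingEnd ℂ) (∫ y in a..b, F y) := by
  rw [intervalIntegral, intervalIntegral, integral_conj, integral_conj, ← map_sub]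

lemma conj_pair (τ : ℂ) (u v : ℂ → ℂ) :
    pairSU τ u v = (starRingEnd ℂ) (pairSU τ v u) := by
  unfold pairSU
  rw [← intervalIntegral_conj]
  refine intervalIntegral.integral_congr fun y _ => ?_
  simp only [map_mul, Complex.conj_conj]
  ring

section Facts

variable {t : ℝ} {τ : ℂ}

lemma conj_tau (ht : 0 < t) (hτ : τ = Complex.I * t) : (starRingEnd ℂ) τ = -τ := by
  rw [hτ]
  simp [map_mul, Complex.conj_I, Complex.conj_ofReal]

lemma tau_ne (ht : 0 < t) (hτ : τ = Complex.I * t) : τ ≠ 0 := by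
  rw [hτ]
  exact mul_ne_zero Complex.I_ne_zero (Complex.ofReal_ne_zero.mpr ht.ne')

lemma conj_cy (ht : 0 < t) (hτ : τ = Complex.I * t) (y : ℝ) : (starRingEnd ℂ) ((y:ℂ)/τ) = -((y:ℂ)/τ) := by
  rw [map_div₀, Complex.conj_ofReal, conj_tau ht hτ, div_neg]

lemma cy_re (ht : 0 < t) (hτ : τ = Complex.I * t) (y : ℝ) : ((y:ℂ)/τ).re = 0 := by
  have h := congrArg Complex.re (conj_cy ht hτ y)
  simp only [Complex.conj_re, Complex.neg_re] at h
  linarith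

lemma arg_rel (ht : 0 < t) (hτ : τ = Complex.I * t) (y r : ℝ) : -((starRingEnd ℂ) ((y:ℂ)/τ + r)) = (y:ℂ)/τ - r := by
  rw [map_add, conj_cy ht hτ, Complex.conj_ofReal]
  ring

lemma arg_rel0 (ht : 0 < t) (hτ : τ = Complex.I * t) (y : ℝ) : -((starRingEnd ℂ) ((y:ℂ)/τ)) = (y:ℂ)/τ := by
  rw [conj_cy ht hτ, neg_neg]

lemma conj_tau_inv (ht : 0 < t) (hτ : τ = Complex.I * t) : (starRingEnd ℂ) τ⁻¹ = -τ⁻¹ := by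
  rw [map_inv₀, conj_tau ht hτ, inv_neg]

end Facts

end PSUaux

namespace PSUaux2
open PSUaux

variable {t : ℝ} {τ : ℂ}

lemma arg_rel' (ht : 0 < t) (hτ : τ = Complex.I * t) (y : ℝ) (r : ℂ)
    (hr : (starRingEnd ℂ) r = r) :
    -((starRingEnd ℂ) ((y:ℂ)/τ + r)) = (y:ℂ)/τ - r := by
  rw [map_add, conj_cy ht hτ, hr]
  ring

lemma G_per (hτ0 : τ ≠ 0) (hct : (starRingEnd ℂ) τ = -τ) (g : ℂ → ℂ)
    (hgp : ∀ z : ℂ, g (z + τ⁻¹) = g z) (z : ℂ) :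
    (starRingEnd ℂ) (g (-((starRingEnd ℂ) (z + τ⁻¹)))) =
      (starRingEnd ℂ) (g (-((starRingEnd ℂ) z))) := by
  congr 1
  rw [map_add, map_inv₀, hct, inv_neg]
  rw [show -((starRingEnd ℂ) z + -τ⁻¹) = -((starRingEnd ℂ) z) + τ⁻¹ from by ring, hgp]

lemma G_diff (g : ℂ → ℂ) (hga : ∀ z : ℂ, |z.re| ≤ 1 → AnalyticAt ℂ g z) (z : ℂ)
    (hz : |z.re| ≤ 1) :
    DifferentiableAt ℂ (fun w => (starRingEnd ℂ) (g (-((starRingEnd ℂ) w)))) z := by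
  have h1 : DifferentiableAt ℂ g ((starRingEnd ℂ) (-z)) := by
    refine (hga _ ?_).differentiableAt
    simpa using hz
  have h2 : DifferentiableAt ℂ (fun w => (starRingEnd ℂ) (g ((starRingEnd ℂ) w))) (-z) :=
    (hasDerivAt_conj_conj h1.hasDerivAt).differentiableAt
  have h3 : DifferentiableAt ℂ
      ((fun w => (starRingEnd ℂ) (g ((starRingEnd ℂ) w))) ∘ (fun w : ℂ => -w)) z :=
    h2.comp z differentiableAt_id.neg
  have heq : (fun w => (starRingEnd ℂ) (g (-((starRingEnd ℂ) w)))) =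
      ((fun w => (starRingEnd ℂ) (g ((starRingEnd ℂ) w))) ∘ (fun w : ℂ => -w)) := by
    funext w
    simp [Function.comp, map_neg]
  rw [heq]
  exact h3

lemma cont_comp (ht : 0 < t) (hτ : τ = Complex.I * t) (F : ℂ → ℂ) (k : ℂ) (hk : |k.re| ≤ 1)
    (hc : ∀ z : ℂ, |z.re| ≤ 1 → ContinuousAt F z) :
    Continuous fun y : ℝ => F ((y:ℂ)/τ + k) := by
  rw [continuous_iff_continuousAt]; intro y
  have h1 : ContinuousAt F ((y:ℂ)/τ + k) := by
    refine hc _ ?_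
    rw [Complex.add_re, cy_re ht hτ, zero_add]
    exact hk
  have h2 : Continuous fun y : ℝ => (y:ℂ)/τ + k :=
    (Complex.continuous_ofReal.div_const τ).add continuous_const
  exact ContinuousAt.comp (x := y) h1 h2.continuousAt

lemma cont_comp0 (ht : 0 < t) (hτ : τ = Complex.I * t) (F : ℂ → ℂ)
    (hc : ∀ z : ℂ, |z.re| ≤ 1 → ContinuousAt F z) :
    Continuous fun y : ℝ => F ((y:ℂ)/τ) := by
  have := cont_comp ht hτ F 0 (by norm_num) hc
  simpa using this

lemma key3 (t : ℝ) (ht : 0 < t) (τ : ℂ) (hτ : τ = Complex.I * (t : ℂ)) (f g : ℂ → ℂ)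
    (hfp : ∀ z : ℂ, f (z + τ⁻¹) = f z) (hgp : ∀ z : ℂ, g (z + τ⁻¹) = g z)
    (hfa : ∀ z : ℂ, |z.re| ≤ 1 → AnalyticAt ℂ f z)
    (hga : ∀ z : ℂ, |z.re| ≤ 1 → AnalyticAt ℂ g z) :
    pairSU τ (fun z => f (z + 1)) g = pairSU τ f (fun z => g (z + 1)) := by
  have hτ0 : τ ≠ 0 := tau_ne ht hτ
  have hct : (starRingEnd ℂ) τ = -τ := conj_tau ht hτ
  set G : ℂ → ℂ := fun w => (starRingEnd ℂ) (g (-((starRingEnd ℂ) w))) with hGdef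
  have hGp : ∀ z : ℂ, G (z + τ⁻¹) = G z := fun z => G_per hτ0 hct g hgp z
  have hGd : ∀ z : ℂ, |z.re| ≤ 1 → DifferentiableAt ℂ G z := fun z hz => G_diff g hga z hz
  have hGcy : ∀ y : ℝ, G ((y:ℂ)/τ) = (starRingEnd ℂ) (g ((y:ℂ)/τ)) := by
    intro y
    rw [hGdef]
    simp only []
    rw [arg_rel0 ht hτ]
  have hGm1 : ∀ y : ℝ, G ((y:ℂ)/τ - 1) = (starRingEnd ℂ) (g ((y:ℂ)/τ + 1)) := by
    intro y
    rw [hGdef]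
    simp only []
    rw [show (y:ℂ)/τ - 1 = (y:ℂ)/τ + (-1) from by ring,
      arg_rel' ht hτ y (-1) (by simp), sub_neg_eq_add]
  have per : ∀ z : ℂ, (fun z => f (z + 1) * G z) (z + τ⁻¹) = (fun z => f (z + 1) * G z) z := by
    intro z
    simp only []
    rw [show z + τ⁻¹ + 1 = z + 1 + τ⁻¹ from by ring, hfp, hGp]
  have hd : ∀ z : ℂ, z.re ∈ Set.uIcc (-1 : ℝ) (-1 + 1) →
      DifferentiableAt ℂ (fun z => f (z + 1) * G z) z := by
    intro z hz
    rw [show (-1 : ℝ) + 1 = 0 from by norm_num, Set.uIcc_of_le (by norm_num)] at hz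
    have h1 : |(z + 1).re| ≤ 1 := by
      rw [Complex.add_re, Complex.one_re]
      rw [abs_le]
      constructor <;> [linarith [hz.1]; linarith [hz.2]]
    have h2 : |z.re| ≤ 1 := by
      rw [abs_le]
      constructor <;> [linarith [hz.1]; linarith [hz.2]]
    exact (((hfa _ h1).differentiableAt).comp z (differentiableAt_id.add_const 1)).mul (hGd z h2)
  have sh := shift_lemma t ht τ hτ (fun z => f (z + 1) * G z) (-1) per hd
  unfold pairSU
  calc (∫ y in (0:ℝ)..1, (fun z => f (z + 1)) ((y:ℂ)/τ) * (starRingEnd ℂ) (g ((y:ℂ)/τ)))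
      = ∫ y in (0:ℝ)..1, (fun z => f (z + 1) * G z) ((y:ℂ)/τ + (((-1 : ℝ) : ℂ) + 1)) := by
        refine intervalIntegral.integral_congr fun y _ => ?_
        simp only []
        rw [show (y:ℂ)/τ + (((-1 : ℝ) : ℂ) + 1) = (y:ℂ)/τ from by push_cast; ring, hGcy]
    _ = ∫ y in (0:ℝ)..1, (fun z => f (z + 1) * G z) ((y:ℂ)/τ + ((-1 : ℝ) : ℂ)) := sh.symm
    _ = ∫ y in (0:ℝ)..1, f ((y:ℂ)/τ) * (starRingEnd ℂ) ((fun z => g (z + 1)) ((y:ℂ)/τ)) := by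
        refine intervalIntegral.integral_congr fun y _ => ?_
        simp only []
        rw [show (y:ℂ)/τ + ((-1 : ℝ) : ℂ) = (y:ℂ)/τ - 1 from by push_cast; ring,
          show (y:ℂ)/τ - 1 + 1 = (y:ℂ)/τ from by ring, hGm1]

lemma key4 (t : ℝ) (ht : 0 < t) (τ : ℂ) (hτ : τ = Complex.I * (t : ℂ)) (f g : ℂ → ℂ)
    (hfp : ∀ z : ℂ, f (z + τ⁻¹) = f z) (hgp : ∀ z : ℂ, g (z + τ⁻¹) = g z)
    (hfa : ∀ z : ℂ, |z.re| ≤ 1 → AnalyticAt ℂ f z)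
    (hga : ∀ z : ℂ, |z.re| ≤ 1 → AnalyticAt ℂ g z) :
    pairSU τ (fun z => f (z - 1)) g = pairSU τ f (fun z => g (z - 1)) := by
  have hτ0 : τ ≠ 0 := tau_ne ht hτ
  have hct : (starRingEnd ℂ) τ = -τ := conj_tau ht hτ
  set G : ℂ → ℂ := fun w => (starRingEnd ℂ) (g (-((starRingEnd ℂ) w))) with hGdef
  have hGp : ∀ z : ℂ, G (z + τ⁻¹) = G z := fun z => G_per hτ0 hct g hgp z
  have hGd : ∀ z : ℂ, |z.re| ≤ 1 → DifferentiableAt ℂ G z := fun z hz => G_diff g hga z hz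
  have hGcy : ∀ y : ℝ, G ((y:ℂ)/τ) = (starRingEnd ℂ) (g ((y:ℂ)/τ)) := by
    intro y
    rw [hGdef]
    simp only []
    rw [arg_rel0 ht hτ]
  have hG1 : ∀ y : ℝ, G ((y:ℂ)/τ + 1) = (starRingEnd ℂ) (g ((y:ℂ)/τ - 1)) := by
    intro y
    rw [hGdef]
    simp only []
    rw [arg_rel' ht hτ y 1 (by simp)]
  have per : ∀ z : ℂ, (fun z => f z * G (z + 1)) (z + τ⁻¹) = (fun z => f z * G (z + 1)) z := by
    intro z
    simp only []
    rw [hfp, show z + τ⁻¹ + 1 = z + 1 + τ⁻¹ from by ring, hGp]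
  have hd : ∀ z : ℂ, z.re ∈ Set.uIcc (-1 : ℝ) (-1 + 1) →
      DifferentiableAt ℂ (fun z => f z * G (z + 1)) z := by
    intro z hz
    rw [show (-1 : ℝ) + 1 = 0 from by norm_num, Set.uIcc_of_le (by norm_num)] at hz
    have h1 : |(z + 1).re| ≤ 1 := by
      rw [Complex.add_re, Complex.one_re]
      rw [abs_le]
      constructor <;> [linarith [hz.1]; linarith [hz.2]]
    have h2 : |z.re| ≤ 1 := by
      rw [abs_le]
      constructor <;> [linarith [hz.1]; linarith [hz.2]]
    exact ((hfa _ h2).differentiableAt).mul ((hGd _ h1).comp (g := G) (f := fun w : ℂ => w + 1) z (differentiableAt_id.add_const (1:ℂ)))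
  have sh := shift_lemma t ht τ hτ (fun z => f z * G (z + 1)) (-1) per hd
  unfold pairSU
  calc (∫ y in (0:ℝ)..1, (fun z => f (z - 1)) ((y:ℂ)/τ) * (starRingEnd ℂ) (g ((y:ℂ)/τ)))
      = ∫ y in (0:ℝ)..1, (fun z => f z * G (z + 1)) ((y:ℂ)/τ + ((-1 : ℝ) : ℂ)) := by
        refine intervalIntegral.integral_congr fun y _ => ?_
        simp only []
        rw [show (y:ℂ)/τ + ((-1 : ℝ) : ℂ) = (y:ℂ)/τ - 1 from by push_cast; ring,
          show (y:ℂ)/τ - 1 + 1 = (y:ℂ)/τ from by ring, hGcy]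
    _ = ∫ y in (0:ℝ)..1, (fun z => f z * G (z + 1)) ((y:ℂ)/τ + (((-1 : ℝ) : ℂ) + 1)) := sh
    _ = ∫ y in (0:ℝ)..1, f ((y:ℂ)/τ) * (starRingEnd ℂ) ((fun z => g (z - 1)) ((y:ℂ)/τ)) := by
        refine intervalIntegral.integral_congr fun y _ => ?_
        simp only []
        rw [show (y:ℂ)/τ + (((-1 : ℝ) : ℂ) + 1) = (y:ℂ)/τ from by push_cast; ring, hG1]

end PSUaux2

namespace PSUaux3
open PSUaux PSUaux2

lemma key1 (t : ℝ) (ht : 0 < t) (τ : ℂ) (hτ : τ = Complex.I * (t : ℂ)) (lam : ℝ) (f g : ℂ → ℂ)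
    (hfp : ∀ z : ℂ, f (z + τ⁻¹) = f z) (hgp : ∀ z : ℂ, g (z + τ⁻¹) = g z)
    (hfa : ∀ z : ℂ, |z.re| ≤ 1 → AnalyticAt ℂ f z)
    (hga : ∀ z : ℂ, |z.re| ≤ 1 → AnalyticAt ℂ g z) :
    pairSU τ (Xplus τ (lam : ℂ) f) g = -pairSU τ f (Xminus τ (lam : ℂ) g) := by
  have hτ0 : τ ≠ 0 := tau_ne ht hτ
  have hct : (starRingEnd ℂ) τ = -τ := conj_tau ht hτ
  set G : ℂ → ℂ := fun w => (starRingEnd ℂ) (g (-((starRingEnd ℂ) w))) with hGdef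
  have hGp : ∀ z : ℂ, G (z + τ⁻¹) = G z := fun z => G_per hτ0 hct g hgp z
  have hGd : ∀ z : ℂ, |z.re| ≤ 1 → DifferentiableAt ℂ G z := fun z hz => G_diff g hga z hz
  have hGcy : ∀ y : ℝ, G ((y:ℂ)/τ) = (starRingEnd ℂ) (g ((y:ℂ)/τ)) := by
    intro y
    rw [hGdef]
    simp only []
    rw [arg_rel0 ht hτ]
  have hG1 : ∀ y : ℝ, G ((y:ℂ)/τ + 1) = (starRingEnd ℂ) (g ((y:ℂ)/τ - 1)) := by
    intro y
    rw [hGdef]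
    simp only []
    rw [arg_rel' ht hτ y 1 (by simp)]
  have hGm1 : ∀ y : ℝ, G ((y:ℂ)/τ - 1) = (starRingEnd ℂ) (g ((y:ℂ)/τ + 1)) := by
    intro y
    rw [hGdef]
    simp only []
    rw [show (y:ℂ)/τ - 1 = (y:ℂ)/τ + (-1) from by ring,
      arg_rel' ht hτ y (-1) (by simp), sub_neg_eq_add]
  have hGat : ∀ z : ℂ, |z.re| ≤ 1 → ContinuousAt G z := fun z hz => (hGd z hz).continuousAt
  have hfat : ∀ z : ℂ, |z.re| ≤ 1 → ContinuousAt f z := fun z hz => (hfa z hz).continuousAt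
  -- continuity of the building blocks
  have cq : Continuous fun y : ℝ => qpow τ ((y:ℂ)/τ) :=
    (qpow_cont τ).comp (Complex.continuous_ofReal.div_const τ)
  have cf0 : Continuous fun y : ℝ => f ((y:ℂ)/τ) := cont_comp0 ht hτ f hfat
  have cfp : Continuous fun y : ℝ => f ((y:ℂ)/τ + 1) :=
    cont_comp ht hτ f 1 (by simp) hfat
  have cfm : Continuous fun y : ℝ => f ((y:ℂ)/τ - 1) := by
    have := cont_comp ht hτ f (-1) (by simp) hfat
    simpa [sub_eq_add_neg] using this
  have cg0 : Continuous fun y : ℝ => G ((y:ℂ)/τ) := cont_comp0 ht hτ G hGat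
  have cgp : Continuous fun y : ℝ => G ((y:ℂ)/τ + 1) :=
    cont_comp ht hτ G 1 (by simp) hGat
  have cgm : Continuous fun y : ℝ => G ((y:ℂ)/τ - 1) := by
    have := cont_comp ht hτ G (-1) (by simp) hGat
    simpa [sub_eq_add_neg] using this
  -- abbreviations
  set a := qpow τ (-(1 / 2) - Complex.I * (lam:ℂ)) with ha
  set b := qpow τ (1 / 2 + Complex.I * (lam:ℂ)) with hb
  set a2 := qpow τ (-(1 / 2) + Complex.I * (lam:ℂ)) with ha2
  set b2 := qpow τ (1 / 2 - Complex.I * (lam:ℂ)) with hb2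
  set D := qpow τ (-1) - qpow τ 1 with hD
  set IP := ∫ y in (0:ℝ)..1, qpow τ ((y:ℂ)/τ) * f ((y:ℂ)/τ) * G ((y:ℂ)/τ + 1) with hIP
  set IQ := ∫ y in (0:ℝ)..1, qpow τ ((y:ℂ)/τ) * f ((y:ℂ)/τ) * G ((y:ℂ)/τ - 1) with hIQ
  -- conjugation facts
  have hcW : ∀ y : ℝ, (starRingEnd ℂ) (qpow τ (-((y:ℂ)/τ))) = qpow τ ((y:ℂ)/τ) := by
    intro y
    rw [conj_qpow t τ hτ, map_neg, conj_cy ht hτ, neg_neg]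
  have hca : (starRingEnd ℂ) (qpow τ (-(1 / 2) - Complex.I * (lam:ℂ))) =
      qpow τ (-(1 / 2) + Complex.I * (lam:ℂ)) := by
    rw [conj_qpow t τ hτ]
    congr 1
    simp only [map_sub, map_neg, map_mul, map_div₀, map_one, map_ofNat, Complex.conj_I,
      Complex.conj_ofReal]
    ring
  have hcb : (starRingEnd ℂ) (qpow τ (1 / 2 + Complex.I * (lam:ℂ))) =
      qpow τ (1 / 2 - Complex.I * (lam:ℂ)) := by
    rw [conj_qpow t τ hτ]
    congr 1
    simp only [map_add, map_mul, map_div₀, map_one, map_ofNat, Complex.conj_I,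
      Complex.conj_ofReal]
    ring
  have hcm1 : (starRingEnd ℂ) (qpow τ (-1)) = qpow τ (-1) := by
    rw [conj_qpow t τ hτ, map_neg, map_one]
  have hc1 : (starRingEnd ℂ) (qpow τ 1) = qpow τ 1 := by
    rw [conj_qpow t τ hτ, map_one]
  -- coefficient identities
  have hb2' : a * qpow τ 1 = b2 := by
    rw [ha, hb2, ← qpow_add]
    congr 1
    ring
  have ha2' : b * qpow τ (-1) = a2 := by
    rw [hb, ha2, ← qpow_add]
    congr 1
    ring
  -- first shift
  have per1 : ∀ z : ℂ, (fun z => qpow τ (z + 1) * f z * G (z + 1)) (z + τ⁻¹) =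
      (fun z => qpow τ (z + 1) * f z * G (z + 1)) z := by
    intro z
    simp only []
    rw [show z + τ⁻¹ + 1 = z + 1 + τ⁻¹ from by ring, qpow_add, qpow_inv τ hτ0, mul_one, hfp, hGp]
  have hd1 : ∀ z : ℂ, z.re ∈ Set.uIcc (-1 : ℝ) (-1 + 1) →
      DifferentiableAt ℂ (fun z => qpow τ (z + 1) * f z * G (z + 1)) z := by
    intro z hz
    rw [show (-1 : ℝ) + 1 = 0 from by norm_num, Set.uIcc_of_le (by norm_num)] at hz
    have h1 : |(z + 1).re| ≤ 1 := by
      rw [Complex.add_re, Complex.one_re, abs_le]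
      constructor <;> [linarith [hz.1]; linarith [hz.2]]
    have h2 : |z.re| ≤ 1 := by
      rw [abs_le]
      constructor <;> [linarith [hz.1]; linarith [hz.2]]
    exact (((qpow_diff τ (z + 1)).comp z (differentiableAt_id.add_const 1)).mul
      ((hfa _ h2).differentiableAt)).mul ((hGd _ h1).comp (g := G) (f := fun w : ℂ => w + 1) z (differentiableAt_id.add_const (1:ℂ)))
  have sh1 := shift_lemma t ht τ hτ (fun z => qpow τ (z + 1) * f z * G (z + 1)) (-1) per1 hd1
  have t1 : (∫ y in (0:ℝ)..1, qpow τ ((y:ℂ)/τ) * f ((y:ℂ)/τ - 1) * G ((y:ℂ)/τ)) =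
      qpow τ 1 * IP := by
    calc (∫ y in (0:ℝ)..1, qpow τ ((y:ℂ)/τ) * f ((y:ℂ)/τ - 1) * G ((y:ℂ)/τ))
        = ∫ y in (0:ℝ)..1,
            (fun z => qpow τ (z + 1) * f z * G (z + 1)) ((y:ℂ)/τ + ((-1 : ℝ) : ℂ)) := by
          refine intervalIntegral.integral_congr fun y _ => ?_
          simp only []
          rw [show (y:ℂ)/τ + ((-1 : ℝ) : ℂ) = (y:ℂ)/τ - 1 from by push_cast; ring,
            show (y:ℂ)/τ - 1 + 1 = (y:ℂ)/τ from by ring]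
      _ = ∫ y in (0:ℝ)..1,
            (fun z => qpow τ (z + 1) * f z * G (z + 1)) ((y:ℂ)/τ + (((-1 : ℝ) : ℂ) + 1)) := sh1
      _ = qpow τ 1 * IP := by
          rw [hIP, ← intervalIntegral.integral_const_mul]
          refine intervalIntegral.integral_congr fun y _ => ?_
          simp only []
          rw [show (y:ℂ)/τ + (((-1 : ℝ) : ℂ) + 1) = (y:ℂ)/τ from by push_cast; ring, qpow_add]
          ring
  -- second shift
  have per2 : ∀ z : ℂ, (fun z => qpow τ (z - 1) * f z * G (z - 1)) (z + τ⁻¹) =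
      (fun z => qpow τ (z - 1) * f z * G (z - 1)) z := by
    intro z
    simp only []
    rw [show z + τ⁻¹ - 1 = z - 1 + τ⁻¹ from by ring, qpow_add, qpow_inv τ hτ0, mul_one, hfp, hGp]
  have hd2 : ∀ z : ℂ, z.re ∈ Set.uIcc (0 : ℝ) (0 + 1) →
      DifferentiableAt ℂ (fun z => qpow τ (z - 1) * f z * G (z - 1)) z := by
    intro z hz
    rw [show (0 : ℝ) + 1 = 1 from by norm_num, Set.uIcc_of_le (by norm_num)] at hz
    have h1 : |(z - 1).re| ≤ 1 := by
      rw [Complex.sub_re, Complex.one_re, abs_le]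
      constructor <;> [linarith [hz.1]; linarith [hz.2]]
    have h2 : |z.re| ≤ 1 := by
      rw [abs_le]
      constructor <;> [linarith [hz.1]; linarith [hz.2]]
    exact (((qpow_diff τ (z - 1)).comp z (differentiableAt_id.sub_const 1)).mul
      ((hfa _ h2).differentiableAt)).mul ((hGd _ h1).comp (g := G) (f := fun w : ℂ => w - 1) z (differentiableAt_id.sub_const (1:ℂ)))
  have sh2 := shift_lemma t ht τ hτ (fun z => qpow τ (z - 1) * f z * G (z - 1)) 0 per2 hd2
  have t2 : (∫ y in (0:ℝ)..1, qpow τ ((y:ℂ)/τ) * f ((y:ℂ)/τ + 1) * G ((y:ℂ)/τ)) =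
      qpow τ (-1) * IQ := by
    calc (∫ y in (0:ℝ)..1, qpow τ ((y:ℂ)/τ) * f ((y:ℂ)/τ + 1) * G ((y:ℂ)/τ))
        = ∫ y in (0:ℝ)..1,
            (fun z => qpow τ (z - 1) * f z * G (z - 1)) ((y:ℂ)/τ + (((0 : ℝ) : ℂ) + 1)) := by
          refine intervalIntegral.integral_congr fun y _ => ?_
          simp only []
          rw [show (y:ℂ)/τ + (((0 : ℝ) : ℂ) + 1) = (y:ℂ)/τ + 1 from by push_cast; ring,
            show (y:ℂ)/τ + 1 - 1 = (y:ℂ)/τ from by ring]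
      _ = ∫ y in (0:ℝ)..1,
            (fun z => qpow τ (z - 1) * f z * G (z - 1)) ((y:ℂ)/τ + ((0 : ℝ) : ℂ)) := sh2.symm
      _ = qpow τ (-1) * IQ := by
          rw [hIQ, ← intervalIntegral.integral_const_mul]
          refine intervalIntegral.integral_congr fun y _ => ?_
          simp only []
          rw [show (y:ℂ)/τ + ((0 : ℝ) : ℂ) = (y:ℂ)/τ from by push_cast; ring,
            show (y:ℂ)/τ - 1 = (y:ℂ)/τ + (-1) from by ring, qpow_add]
          ring
  -- the left-hand side
  have i1 : IntervalIntegrable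
      (fun y : ℝ => a / D * (qpow τ ((y:ℂ)/τ) * f ((y:ℂ)/τ - 1) * G ((y:ℂ)/τ))) volume 0 1 :=
    (continuous_const.mul ((cq.mul cfm).mul cg0)).intervalIntegrable 0 1
  have i2 : IntervalIntegrable
      (fun y : ℝ => b / D * (qpow τ ((y:ℂ)/τ) * f ((y:ℂ)/τ + 1) * G ((y:ℂ)/τ))) volume 0 1 :=
    (continuous_const.mul ((cq.mul cfp).mul cg0)).intervalIntegrable 0 1
  have i3 : IntervalIntegrable
      (fun y : ℝ => a2 / D * (qpow τ ((y:ℂ)/τ) * f ((y:ℂ)/τ) * G ((y:ℂ)/τ - 1))) volume 0 1 :=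
    (continuous_const.mul ((cq.mul cf0).mul cgm)).intervalIntegrable 0 1
  have i4 : IntervalIntegrable
      (fun y : ℝ => b2 / D * (qpow τ ((y:ℂ)/τ) * f ((y:ℂ)/τ) * G ((y:ℂ)/τ + 1))) volume 0 1 :=
    (continuous_const.mul ((cq.mul cf0).mul cgp)).intervalIntegrable 0 1
  have hL : pairSU τ (Xplus τ (lam : ℂ) f) g = a / D * (qpow τ 1 * IP) - b / D * (qpow τ (-1) * IQ) := by
    unfold pairSU Xplus
    refine Eq.trans (intervalIntegral.integral_congr (g := fun y : ℝ =>
        a / D * (qpow τ ((y:ℂ)/τ) * f ((y:ℂ)/τ - 1) * G ((y:ℂ)/τ)) -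
        b / D * (qpow τ ((y:ℂ)/τ) * f ((y:ℂ)/τ + 1) * G ((y:ℂ)/τ))) fun y _ => ?_) ?_
    · rw [ha, hb, hD, ← hGcy y]
      ring
    · rw [intervalIntegral.integral_sub i1 i2, intervalIntegral.integral_const_mul,
        intervalIntegral.integral_const_mul, t1, t2]
  have hR : pairSU τ f (Xminus τ (lam : ℂ) g) = a2 / D * IQ - b2 / D * IP := by
    unfold pairSU Xminus
    refine Eq.trans (intervalIntegral.integral_congr (g := fun y : ℝ =>
        a2 / D * (qpow τ ((y:ℂ)/τ) * f ((y:ℂ)/τ) * G ((y:ℂ)/τ - 1)) -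
        b2 / D * (qpow τ ((y:ℂ)/τ) * f ((y:ℂ)/τ) * G ((y:ℂ)/τ + 1))) fun y _ => ?_) ?_
    · simp only [map_div₀, map_sub, map_mul, hcW, hca, hcb, hcm1, hc1]
      rw [ha2, hb2, hD, ← hGm1 y, ← hG1 y]
      ring
    · rw [intervalIntegral.integral_sub i3 i4, intervalIntegral.integral_const_mul,
        intervalIntegral.integral_const_mul, ← hIQ, ← hIP]
  rw [hL, hR]
  linear_combination (IP * hb2' - IQ * ha2') / D

end PSUaux3

open PSUaux PSUaux2 PSUaux3 in
/-- Unitarity of the principal series representation of `U_q(su(1,1))` for `0 < q < 1`: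
for `τ⁻¹`-periodic functions `f, g` analytic on the strip `|Re z| ≤ 1`,
`⟨X⁺_λ f, g⟩ = −⟨f, X⁻_λ g⟩`, `⟨X⁻_λ f, g⟩ = −⟨f, X⁺_λ g⟩`, and
`⟨K^{±1} f, g⟩ = ⟨f, K^{±1} g⟩`. -/
theorem principal_series_unitarity (t : ℝ) (ht : 0 < t) (τ : ℂ)
    (hτ : τ = Complex.I * (t : ℂ)) (lam : ℝ) (f g : ℂ → ℂ)
    (hfp : ∀ z : ℂ, f (z + τ⁻¹) = f z) (hgp : ∀ z : ℂ, g (z + τ⁻¹) = g z)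
    (hfa : ∀ z : ℂ, |z.re| ≤ 1 → AnalyticAt ℂ f z)
    (hga : ∀ z : ℂ, |z.re| ≤ 1 → AnalyticAt ℂ g z) :
    pairSU τ (Xplus τ (lam : ℂ) f) g = -pairSU τ f (Xminus τ (lam : ℂ) g) ∧
    pairSU τ (Xminus τ (lam : ℂ) f) g = -pairSU τ f (Xplus τ (lam : ℂ) g) ∧
    pairSU τ (fun z => f (z + 1)) g = pairSU τ f (fun z => g (z + 1)) ∧
    pairSU τ (fun z => f (z - 1)) g = pairSU τ f (fun z => g (z - 1)) := by
  refine ⟨key1 t ht τ hτ lam f g hfp hgp hfa hga, ?_,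
    key3 t ht τ hτ f g hfp hgp hfa hga, key4 t ht τ hτ f g hfp hgp hfa hga⟩
  have h := key1 t ht τ hτ lam g f hgp hfp hga hfa
  calc pairSU τ (Xminus τ (lam : ℂ) f) g
      = (starRingEnd ℂ) (pairSU τ g (Xminus τ (lam : ℂ) f)) := conj_pair τ _ _
    _ = (starRingEnd ℂ) (-(pairSU τ (Xplus τ (lam : ℂ) g) f)) := by
        rw [show pairSU τ g (Xminus τ (lam : ℂ) f) = -(pairSU τ (Xplus τ (lam : ℂ) g) f) from by
          linear_combination h]
    _ = -((starRingEnd ℂ) (pairSU τ (Xplus τ (lam : ℂ) g) f)) := map_neg _ _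
    _ = -pairSU τ f (Xplus τ (lam : ℂ) g) := by rw [← conj_pair]
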